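/- Under the SOS feasibility setup, suppose there exist a symmetric positive definite P ∈ ℝ^{d×d}, a matrix W ∈ ℝ^{d_Z×d}, and symmetric positive definite matrices S_k ∈ ℝ^{(d_ζ d)×(d_ζ d)} (k = 1,…,K) such that for every x ∈ ℝⁿ and every k, U_k(x,P,W) + U_k(x,P,W)ᵀ = (ζ(x) ⊗ I_d)ᵀ S_k (ζ(x) ⊗ I_d). Then, setting Q := P⁻¹, H := W P⁻¹, S̄_k := (I_{d_ζ} ⊗ P⁻¹)ᵀ S_k (I_{d_ζ} ⊗ P⁻¹), and ε := the minimum over the smallest eigenvalues of Q and of S̄_1, …, S̄_K, the following hold: ε > 0; Q is symmetric and Q − ε I_d is positive semidefinite; for every k, S̄_k is symmetric and S̄_k − ε I_{d_ζ d} is positive semidefinite; and for every x ∈ ℝⁿ and every k, Y_k(x,Q,H) + Y_k(x,Q,H)ᵀ = (ζ(x) ⊗ I_d)ᵀ S̄_k (ζ(x) ⊗ I_d). -/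

import Mathlib

open Matrix
open scoped Kronecker

noncomputable section

/-- `ζ(x) ⊗ I_d` (with the column index canonically identified with `Fin d`). -/
def zetaI {n : ℕ} (dζ d : ℕ) (ζ : (Fin n → ℝ) → Fin dζ → ℝ) (x : Fin n → ℝ) :
    Matrix (Fin dζ × Fin d) (Fin d) ℝ :=
  ((Matrix.of fun i (_ : Unit) => ζ x i) ⊗ₖ (1 : Matrix (Fin d) (Fin d) ℝ)).submatrix
    id fun j => ((), j)

/-- `U_k(x,P,W) = −((P+Pᵀ)/2) · Dz(x) · (F_k(x) + G_k(x) Z(x) W)`. -/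
def Umat {n m d dZ : ℕ} (Dz : (Fin n → ℝ) → Matrix (Fin d) (Fin n) ℝ)
    (F : (Fin n → ℝ) → Matrix (Fin n) (Fin d) ℝ)
    (G : (Fin n → ℝ) → Matrix (Fin n) (Fin m) ℝ)
    (Z : (Fin n → ℝ) → Matrix (Fin m) (Fin dZ) ℝ)
    (x : Fin n → ℝ) (P : Matrix (Fin d) (Fin d) ℝ) (W : Matrix (Fin dZ) (Fin d) ℝ) :
    Matrix (Fin d) (Fin d) ℝ :=
  -(((1 : ℝ) / 2) • (P + Pᵀ)) * (Dz x * (F x + G x * Z x * W))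

/-- `Y_k(x,Q,H) = −Dz(x) · (F_k(x) Q + G_k(x) Z(x) H)`. -/
def Ymat {n m d dZ : ℕ} (Dz : (Fin n → ℝ) → Matrix (Fin d) (Fin n) ℝ)
    (F : (Fin n → ℝ) → Matrix (Fin n) (Fin d) ℝ)
    (G : (Fin n → ℝ) → Matrix (Fin n) (Fin m) ℝ)
    (Z : (Fin n → ℝ) → Matrix (Fin m) (Fin dZ) ℝ)
    (x : Fin n → ℝ) (Q : Matrix (Fin d) (Fin d) ℝ) (H : Matrix (Fin dZ) (Fin d) ℝ) :
    Matrix (Fin d) (Fin d) ℝ :=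
  -(Dz x * (F x * Q + G x * Z x * H))

section AuxLemmas

variable {N : Type*} [Fintype N] [DecidableEq N]

/-- A positive definite real matrix dominates `ε • 1` for some `ε > 0`. -/
lemma aux_exists_eps [Nonempty N] {A : Matrix N N ℝ} (hA : A.PosDef) :
    ∃ ε : ℝ, 0 < ε ∧ (A - ε • 1).PosSemidef := by
  classical
  obtain ⟨i0, -, hi0⟩ := Finset.exists_min_image Finset.univ hA.1.eigenvalues
    ⟨Classical.arbitrary N, Finset.mem_univ _⟩
  refine ⟨hA.1.eigenvalues i0, hA.eigenvalues_pos i0, ?_⟩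
  set ε := hA.1.eigenvalues i0 with hε
  set U : Matrix N N ℝ := (hA.1.eigenvectorUnitary : Matrix N N ℝ) with hUdef
  have hU : U * star U = 1 := Matrix.mem_unitaryGroup_iff.mp hA.1.eigenvectorUnitary.2
  have hd : Matrix.diagonal (fun i => hA.1.eigenvalues i - ε)
      = Matrix.diagonal (RCLike.ofReal ∘ hA.1.eigenvalues) - ε • 1 := by
    rw [Matrix.smul_one_eq_diagonal, Matrix.diagonal_sub]
    simp [Function.comp]
  have hspec : A = U * Matrix.diagonal (RCLike.ofReal ∘ hA.1.eigenvalues) * star U :=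
    hA.1.spectral_theorem
  have h1 : A - ε • 1 =
      U * (Matrix.diagonal (fun i => hA.1.eigenvalues i - ε)) * star U := by
    rw [hd, Matrix.mul_sub, Matrix.sub_mul, ← hspec, Matrix.mul_smul, Matrix.mul_one, Matrix.smul_mul, hU]
  rw [h1, Matrix.star_eq_conjTranspose]
  exact (Matrix.posSemidef_diagonal_iff.mpr fun i => sub_nonneg.2
    (hi0 i (Finset.mem_univ i))).mul_mul_conjTranspose_same U

lemma aux_psd_mono {A : Matrix N N ℝ} {a b : ℝ} (hb : b ≤ a)
    (h : (A - a • 1).PosSemidef) : (A - b • 1).PosSemidef := by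
  have hE : A - b • 1 = (A - a • 1) + (a - b) • (1 : Matrix N N ℝ) := by
    rw [sub_smul]; abel
  rw [hE]
  refine h.add ?_
  rw [Matrix.smul_one_eq_diagonal]
  exact Matrix.posSemidef_diagonal_iff.mpr fun i => sub_nonneg.2 hb

lemma aux_posdef_conj {A : Matrix N N ℝ} (hA : A.PosDef) {B : Matrix N N ℝ}
    (hB : IsUnit B) : (Bᵀ * A * B).PosDef := by
  have hAt : Aᵀ = A := by
    have := hA.1
    rwa [Matrix.IsHermitian, Matrix.conjTranspose_eq_transpose_of_trivial] at this
  refine Matrix.PosDef.of_dotProduct_mulVec_pos ?_ ?_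
  · rw [Matrix.IsHermitian, Matrix.conjTranspose_eq_transpose_of_trivial,
      Matrix.transpose_mul, Matrix.transpose_mul, Matrix.transpose_transpose, hAt,
      Matrix.mul_assoc]
  · intro x hx
    have hBx : B *ᵥ x ≠ 0 := by
      intro h0
      exact hx (Matrix.mulVec_injective_iff_isUnit.mpr hB
        (by simpa [Matrix.mulVec_zero] using h0 : B *ᵥ x = B *ᵥ 0))
    have := hA.dotProduct_mulVec_pos hBx
    have hcalc : star x ⬝ᵥ (Bᵀ * A * B) *ᵥ x = star (B *ᵥ x) ⬝ᵥ A *ᵥ (B *ᵥ x) := by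
      simp only [star_trivial, ← Matrix.mulVec_mulVec, Matrix.dotProduct_mulVec,
        Matrix.vecMul_transpose]
    rw [hcalc]
    exact this

lemma zetaI_mul_right {n dζ d : ℕ} (ζ : (Fin n → ℝ) → Fin dζ → ℝ) (x : Fin n → ℝ)
    (Q : Matrix (Fin d) (Fin d) ℝ) :
    zetaI dζ d ζ x * Q = ((1 : Matrix (Fin dζ) (Fin dζ) ℝ) ⊗ₖ Q) * zetaI dζ d ζ x := by
  ext ⟨i, a⟩ b
  simp [zetaI, Matrix.mul_apply, Fintype.sum_prod_type, Matrix.one_apply,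
    Matrix.kroneckerMap_apply, mul_comm]

end AuxLemmas

/-- from an SOS certificate for `U_k(·,P,W)` (with `P` symmetric positive
definite) one obtains, after the change of variables `Q = P⁻¹`, `H = W P⁻¹`,
`S̄_k = (I ⊗ P⁻¹)ᵀ S_k (I ⊗ P⁻¹)`, a uniformly positive SOS certificate for `Y_k(·,Q,H)`:
there is `ε > 0` (the minimum of the smallest eigenvalues of `Q` and the `S̄_k`) such that
`Q` is symmetric with `Q − εI ⪰ 0`, each `S̄_k` is symmetric with `S̄_k − εI ⪰ 0`, and
`Y_k + Y_kᵀ = (ζ⊗I)ᵀ S̄_k (ζ⊗I)` everywhere. -/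
theorem sos_initial_controller_feasibility
    {n m d dζ dZ K : ℕ}
    (hn : 0 < n) (hm : 0 < m) (hd : 0 < d) (hdζ : 0 < dζ) (hdZ : 0 < dZ) (hK : 0 < K)
    (z : (Fin n → ℝ) → Fin d → ℝ)
    (Dz : (Fin n → ℝ) → Matrix (Fin d) (Fin n) ℝ)
    (hz : ∀ x, HasFDerivAt z (LinearMap.toContinuousLinearMap (Dz x).mulVecLin) x)
    (ζ : (Fin n → ℝ) → Fin dζ → ℝ)
    (F : Fin K → (Fin n → ℝ) → Matrix (Fin n) (Fin d) ℝ)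
    (G : Fin K → (Fin n → ℝ) → Matrix (Fin n) (Fin m) ℝ)
    (Z : (Fin n → ℝ) → Matrix (Fin m) (Fin dZ) ℝ)
    (P : Matrix (Fin d) (Fin d) ℝ) (hP : P.PosDef)
    (W : Matrix (Fin dZ) (Fin d) ℝ)
    (Ssos : Fin K → Matrix (Fin dζ × Fin d) (Fin dζ × Fin d) ℝ)
    (hSsos : ∀ k, (Ssos k).PosDef)
    (hcert : ∀ (x : Fin n → ℝ) (k : Fin K),
      Umat Dz (F k) (G k) Z x P W + (Umat Dz (F k) (G k) Z x P W)ᵀ =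
        (zetaI dζ d ζ x)ᵀ * Ssos k * zetaI dζ d ζ x) :
    ∀ (Q : Matrix (Fin d) (Fin d) ℝ) (H : Matrix (Fin dZ) (Fin d) ℝ)
      (Sb : Fin K → Matrix (Fin dζ × Fin d) (Fin dζ × Fin d) ℝ),
      Q = P⁻¹ → H = W * P⁻¹ →
      (∀ k, Sb k = ((1 : Matrix (Fin dζ) (Fin dζ) ℝ) ⊗ₖ P⁻¹)ᵀ * Ssos k *
        ((1 : Matrix (Fin dζ) (Fin dζ) ℝ) ⊗ₖ P⁻¹)) →
      ∃ ε : ℝ, 0 < ε ∧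
        Qᵀ = Q ∧ (Q - ε • 1).PosSemidef ∧
        (∀ k, (Sb k)ᵀ = Sb k ∧ (Sb k - ε • 1).PosSemidef) ∧
        (∀ (x : Fin n → ℝ) (k : Fin K),
          Ymat Dz (F k) (G k) Z x Q H + (Ymat Dz (F k) (G k) Z x Q H)ᵀ =
            (zetaI dζ d ζ x)ᵀ * Sb k * zetaI dζ d ζ x) := by
  
  intro Q H Sb hQ hH hSb
  classical
  haveI : Nonempty (Fin d) := Fin.pos_iff_nonempty.mp hd
  haveI : Nonempty (Fin dζ) := Fin.pos_iff_nonempty.mp hdζ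
  haveI : Nonempty (Fin K) := Fin.pos_iff_nonempty.mp hK
  -- basic facts about P
  have hPT : Pᵀ = P := by
    have := hP.1
    rwa [Matrix.IsHermitian, Matrix.conjTranspose_eq_transpose_of_trivial] at this
  have hQpd : Q.PosDef := hQ ▸ hP.inv
  have hQT : Qᵀ = Q := by
    have := hQpd.1
    rwa [Matrix.IsHermitian, Matrix.conjTranspose_eq_transpose_of_trivial] at this
  have hPunit : IsUnit P.det := isUnit_iff_ne_zero.mpr hP.det_pos.ne'
  have hQP : Q * P = 1 := by rw [hQ]; exact Matrix.nonsing_inv_mul P hPunit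
  -- the congruence matrix is invertible
  set B : Matrix (Fin dζ × Fin d) (Fin dζ × Fin d) ℝ :=
    (1 : Matrix (Fin dζ) (Fin dζ) ℝ) ⊗ₖ P⁻¹ with hB
  have hBunit : IsUnit B := by
    rw [Matrix.isUnit_iff_isUnit_det, hB, Matrix.det_kronecker]
    simp only [Matrix.det_one, one_pow, one_mul]
    exact ((Matrix.isUnit_iff_isUnit_det _).mp hP.inv.isUnit).pow _
  have hSbpd : ∀ k, (Sb k).PosDef := fun k => by
    rw [hSb k]; exact aux_posdef_conj (hSsos k) hBunit
  -- choose ε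
  obtain ⟨εQ, hεQpos, hεQ⟩ := aux_exists_eps hQpd
  choose εS hεSpos hεSpsd using fun k => aux_exists_eps (hSbpd k)
  set ε : ℝ := min εQ (Finset.univ.inf' Finset.univ_nonempty εS) with hεdef
  have hεpos : 0 < ε := lt_min hεQpos
    ((Finset.lt_inf'_iff _).mpr fun k _ => hεSpos k)
  refine ⟨ε, hεpos, hQT, aux_psd_mono (min_le_left _ _) hεQ, fun k => ?_, ?_⟩
  · constructor
    · have := (hSbpd k).1
      rwa [Matrix.IsHermitian, Matrix.conjTranspose_eq_transpose_of_trivial] at this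
    · exact aux_psd_mono (le_trans (min_le_right _ _)
        (Finset.inf'_le _ (Finset.mem_univ k))) (hεSpsd k)
  · intro x k
    -- the key algebraic identity
    have hU : Umat Dz (F k) (G k) Z x P W
        = -(P * (Dz x * (F k x + G k x * Z x * W))) := by
      rw [Umat, hPT]
      have h2 : ((1 : ℝ) / 2) • (P + P) = P := by
        rw [← two_smul ℝ P, smul_smul]; norm_num
      rw [h2, Matrix.neg_mul]
    have hYU : Ymat Dz (F k) (G k) Z x Q H
        = Q * Umat Dz (F k) (G k) Z x P W * Q := by
      rw [hU, Ymat, Matrix.mul_neg, Matrix.neg_mul, neg_inj, ← Matrix.mul_assoc,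
        ← Matrix.mul_assoc, hQP, Matrix.one_mul, hH, ← hQ]
      simp only [Matrix.mul_assoc, Matrix.add_mul]
    have hYtU : (Ymat Dz (F k) (G k) Z x Q H)ᵀ
        = Q * (Umat Dz (F k) (G k) Z x P W)ᵀ * Q := by
      rw [hYU, Matrix.transpose_mul, Matrix.transpose_mul, hQT, Matrix.mul_assoc]
    have hsum : Ymat Dz (F k) (G k) Z x Q H + (Ymat Dz (F k) (G k) Z x Q H)ᵀ
        = Q * (Umat Dz (F k) (G k) Z x P W + (Umat Dz (F k) (G k) Z x P W)ᵀ) * Q := by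
      rw [hYtU, hYU, Matrix.mul_add, Matrix.add_mul]
    rw [hsum, hcert x k]
    -- commute ζ⊗I past Q
    have hcomm : zetaI dζ d ζ x * Q = B * zetaI dζ d ζ x := by
      rw [hQ, hB]; exact zetaI_mul_right ζ x P⁻¹
    have hcommT : Q * (zetaI dζ d ζ x)ᵀ = (zetaI dζ d ζ x)ᵀ * Bᵀ := by
      have := congrArg Matrix.transpose hcomm
      rwa [Matrix.transpose_mul, Matrix.transpose_mul, hQT] at this
    calc Q * ((zetaI dζ d ζ x)ᵀ * Ssos k * zetaI dζ d ζ x) * Q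
        = (Q * (zetaI dζ d ζ x)ᵀ) * Ssos k * (zetaI dζ d ζ x * Q) := by
          simp only [Matrix.mul_assoc]
      _ = (zetaI dζ d ζ x)ᵀ * (Bᵀ * Ssos k * B) * zetaI dζ d ζ x := by
          rw [hcommT, hcomm]
          simp only [Matrix.mul_assoc]
      _ = (zetaI dζ d ζ x)ᵀ * Sb k * zetaI dζ d ζ x := by rw [hSb k, hB]
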